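/- Let (f_D)_{D≥1} be a strictly increasing sequence of positive reals whose difference sequence (f_{D+1} − f_D)_{D≥1} is strictly decreasing and positive. Then for every positive integer X and every interval [a,b] ⊆ [0,1]: |#{1 ≤ D ≤ X : f_D mod 1 ∈ [a,b]} − (b−a)·X| < (3π+1)·X^{1/2}·f_{X+1}^{1/2} + (π/2)·1/(f_{X+2} − f_{X+1}). -/

import Mathlib

set_option maxHeartbeats 1000000
set_option linter.unusedTactic false
set_option linter.unreachableTactic false

noncomputable def sawPhi (x : ℝ) : ℝ := Int.fract x * (Int.fract x - 1) / 2

lemma sawPhi_nonpos (x : ℝ) : sawPhi x ≤ 0 := by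
  have h0 := Int.fract_nonneg x
  have h1 := Int.fract_lt_one x
  unfold sawPhi; nlinarith

lemma sawPhi_ge (x : ℝ) : -(1/8) ≤ sawPhi x := by
  have h0 := Int.fract_nonneg x
  have h1 := Int.fract_lt_one x
  unfold sawPhi; nlinarith [sq_nonneg (Int.fract x - 1/2)]

lemma key_ident (u v : ℝ) :
    (v - u) * Int.fract u
      = (v - u)/2 - (v - u)^2/2 + (sawPhi v - sawPhi u)
        + ((⌊v⌋ - ⌊u⌋ : ℤ) : ℝ) * (((⌊v⌋ - ⌊u⌋ : ℤ) : ℝ) - 1 + 2 * Int.fract v) / 2 := by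
  unfold sawPhi
  rw [Int.fract, Int.fract]
  push_cast
  ring

lemma Eterm_bounds (u v : ℝ) (huv : u < v) :
    0 ≤ ((⌊v⌋ - ⌊u⌋ : ℤ) : ℝ) * (((⌊v⌋ - ⌊u⌋ : ℤ) : ℝ) - 1 + 2 * Int.fract v) / 2 ∧
    ((⌊v⌋ - ⌊u⌋ : ℤ) : ℝ) * (((⌊v⌋ - ⌊u⌋ : ℤ) : ℝ) - 1 + 2 * Int.fract v) / 2
      ≤ ((⌊v⌋ - ⌊u⌋ : ℤ) : ℝ) * (v - u) := by
  have hk : (0:ℤ) ≤ ⌊v⌋ - ⌊u⌋ := by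
    have := Int.floor_mono huv.le; omega
  have hk' : (0:ℝ) ≤ ((⌊v⌋ - ⌊u⌋ : ℤ) : ℝ) := by exact_mod_cast hk
  have ht0 := Int.fract_nonneg v
  have ht1 := Int.fract_lt_one v
  have hs0 := Int.fract_nonneg u
  have hs1 := Int.fract_lt_one u
  rcases eq_or_lt_of_le hk with h0 | h1
  · constructor <;> simp [← h0] <;> nlinarith [hs0]
  · have hk1 : (1:ℝ) ≤ ((⌊v⌋ - ⌊u⌋ : ℤ) : ℝ) := by exact_mod_cast h1
    have hvu : v - u = ((⌊v⌋ - ⌊u⌋ : ℤ) : ℝ) + Int.fract v - Int.fract u := by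
      rw [Int.fract, Int.fract]; push_cast; ring
    constructor
    · nlinarith
    · nlinarith

-- the per-step decomposition, divided by the gap
lemma fract_step (F : ℕ → ℝ) (hm : ∀ n, F n < F (n+1)) (c : ℝ) (n : ℕ) :
    Int.fract (F n - c)
      = (1/2 - (F (n+1) - F n)/2)
        + (sawPhi (F (n+1) - c) - sawPhi (F n - c)) / (F (n+1) - F n)
        + ((⌊F (n+1) - c⌋ - ⌊F n - c⌋ : ℤ) : ℝ)
            * (((⌊F (n+1) - c⌋ - ⌊F n - c⌋ : ℤ) : ℝ) - 1 + 2 * Int.fract (F (n+1) - c)) / 2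
            / (F (n+1) - F n) := by
  have hd : 0 < F (n+1) - F n := sub_pos.mpr (hm n)
  have h := key_ident (F n - c) (F (n+1) - c)
  have hvu : (F (n+1) - c) - (F n - c) = F (n+1) - F n := by ring
  rw [hvu] at h
  field_simp
  push_cast at h ⊢
  linear_combination 2 * h

lemma sum_fract_eq (F : ℕ → ℝ) (hm : ∀ n, F n < F (n+1)) (c : ℝ) (X : ℕ) :
    ∑ n ∈ Finset.range X, Int.fract (F n - c)
      = (X : ℝ)/2 - (F X - F 0)/2
        + ∑ n ∈ Finset.range X, (sawPhi (F (n+1) - c) - sawPhi (F n - c)) / (F (n+1) - F n)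
        + ∑ n ∈ Finset.range X, ((⌊F (n+1) - c⌋ - ⌊F n - c⌋ : ℤ) : ℝ)
            * (((⌊F (n+1) - c⌋ - ⌊F n - c⌋ : ℤ) : ℝ) - 1 + 2 * Int.fract (F (n+1) - c)) / 2
            / (F (n+1) - F n) := by
  have h1 : ∑ n ∈ Finset.range X, Int.fract (F n - c)
      = ∑ n ∈ Finset.range X, ((1/2 - (F (n+1) - F n)/2)
        + (sawPhi (F (n+1) - c) - sawPhi (F n - c)) / (F (n+1) - F n)
        + ((⌊F (n+1) - c⌋ - ⌊F n - c⌋ : ℤ) : ℝ)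
            * (((⌊F (n+1) - c⌋ - ⌊F n - c⌋ : ℤ) : ℝ) - 1 + 2 * Int.fract (F (n+1) - c)) / 2
            / (F (n+1) - F n)) :=
    Finset.sum_congr rfl fun n _ => fract_step F hm c n
  rw [h1]
  rw [Finset.sum_add_distrib, Finset.sum_add_distrib, Finset.sum_sub_distrib]
  have h2 : ∑ n ∈ Finset.range X, (F (n+1) - F n)/2 = (F X - F 0)/2 := by
    rw [← Finset.sum_div, Finset.sum_range_sub]
  rw [h2]
  rw [Finset.sum_const, Finset.card_range]
  push_cast
  ring

-- Abel-type bound for the Phi sum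
lemma abel_bound (F : ℕ → ℝ) (hm : ∀ n, F n < F (n+1))
    (hd : ∀ n, F (n+2) - F (n+1) < F (n+1) - F n) (c : ℝ) (M : ℕ) :
    |∑ n ∈ Finset.range (M+1), (sawPhi (F (n+1) - c) - sawPhi (F n - c)) / (F (n+1) - F n)
       - sawPhi (F (M+1) - c) / (F (M+1) - F M)|
      ≤ 1 / (8 * (F (M+1) - F M)) := by
  induction M with
  | zero =>
      have hd0 : 0 < F 1 - F 0 := sub_pos.mpr (hm 0)
      have h1 := sawPhi_nonpos (F 0 - c)
      have h2 := sawPhi_ge (F 0 - c)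
      have he : ∑ n ∈ Finset.range (0+1),
            (sawPhi (F (n+1) - c) - sawPhi (F n - c)) / (F (n+1) - F n)
          - sawPhi (F (0+1) - c) / (F (0+1) - F 0)
          = -sawPhi (F 0 - c) / (F 1 - F 0) := by
        rw [Finset.sum_range_one]; ring
      rw [he, abs_div, abs_of_pos hd0]
      have hnum : |-sawPhi (F 0 - c)| ≤ 1/8 := by
        rw [abs_le]; constructor <;> linarith
      calc |-sawPhi (F 0 - c)| / (F 1 - F 0) ≤ (1/8) / (F 1 - F 0) := by gcongr
        _ = 1 / (8 * (F 1 - F 0)) := div_div 1 8 _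
  | succ M ih =>
      have hdM : 0 < F (M+1) - F M := sub_pos.mpr (hm M)
      have hdM1 : 0 < F (M+2) - F (M+1) := sub_pos.mpr (hm (M+1))
      have hlt : F (M+2) - F (M+1) < F (M+1) - F M := hd M
      have h1 := sawPhi_nonpos (F (M+1) - c)
      have h2 := sawPhi_ge (F (M+1) - c)
      rw [Finset.sum_range_succ]
      have he : (∑ n ∈ Finset.range (M+1),
            (sawPhi (F (n+1) - c) - sawPhi (F n - c)) / (F (n+1) - F n))
          + (sawPhi (F (M+1+1) - c) - sawPhi (F (M+1) - c)) / (F (M+1+1) - F (M+1))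
          - sawPhi (F (M+1+1) - c) / (F (M+1+1) - F (M+1))
          = ((∑ n ∈ Finset.range (M+1),
              (sawPhi (F (n+1) - c) - sawPhi (F n - c)) / (F (n+1) - F n))
             - sawPhi (F (M+1) - c) / (F (M+1) - F M))
            + sawPhi (F (M+1) - c) * (1/(F (M+1) - F M) - 1/(F (M+2) - F (M+1))) := by
        field_simp
        ring
      rw [he]
      have hinv : 1/(F (M+1) - F M) - 1/(F (M+2) - F (M+1)) ≤ 0 := by
        have : 1/(F (M+1) - F M) ≤ 1/(F (M+2) - F (M+1)) := by gcongr
        linarith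
      have hB : |sawPhi (F (M+1) - c) * (1/(F (M+1) - F M) - 1/(F (M+2) - F (M+1)))|
          ≤ (1/8) * (1/(F (M+2) - F (M+1)) - 1/(F (M+1) - F M)) := by
        rw [abs_mul]
        have ha1 : |sawPhi (F (M+1) - c)| ≤ 1/8 := by rw [abs_le]; constructor <;> linarith
        have ha2 : |1/(F (M+1) - F M) - 1/(F (M+2) - F (M+1))|
            = 1/(F (M+2) - F (M+1)) - 1/(F (M+1) - F M) := by
          rw [abs_of_nonpos hinv]; ring
        rw [ha2]
        have : 0 ≤ 1/(F (M+2) - F (M+1)) - 1/(F (M+1) - F M) := by linarith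
        exact mul_le_mul_of_nonneg_right ha1 this |>.trans_eq rfl
      calc |_ + _| ≤ _ + _ := abs_add_le _ _
        _ ≤ 1 / (8 * (F (M+1) - F M))
            + (1/8) * (1/(F (M+2) - F (M+1)) - 1/(F (M+1) - F M)) := add_le_add ih hB
        _ = 1 / (8 * (F (M+1+1) - F (M+1))) := by
            show _ = 1 / (8 * (F (M+2) - F (M+1)))
            field_simp
            ring

lemma Esum_bounds (F : ℕ → ℝ) (hm : ∀ n, F n < F (n+1)) (c : ℝ) (X : ℕ) :
    0 ≤ ∑ n ∈ Finset.range X, ((⌊F (n+1) - c⌋ - ⌊F n - c⌋ : ℤ) : ℝ)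
            * (((⌊F (n+1) - c⌋ - ⌊F n - c⌋ : ℤ) : ℝ) - 1 + 2 * Int.fract (F (n+1) - c)) / 2
            / (F (n+1) - F n) ∧
    ∑ n ∈ Finset.range X, ((⌊F (n+1) - c⌋ - ⌊F n - c⌋ : ℤ) : ℝ)
            * (((⌊F (n+1) - c⌋ - ⌊F n - c⌋ : ℤ) : ℝ) - 1 + 2 * Int.fract (F (n+1) - c)) / 2
            / (F (n+1) - F n)
      ≤ ((⌊F X - c⌋ : ℤ) : ℝ) - ((⌊F 0 - c⌋ : ℤ) : ℝ) := by
  constructor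
  · apply Finset.sum_nonneg
    intro n _
    have hd : 0 < F (n+1) - F n := sub_pos.mpr (hm n)
    have huv : F n - c < F (n+1) - c := by linarith [hm n]
    exact div_nonneg (Eterm_bounds _ _ huv).1 hd.le
  · have h1 : ∀ n ∈ Finset.range X, ((⌊F (n+1) - c⌋ - ⌊F n - c⌋ : ℤ) : ℝ)
            * (((⌊F (n+1) - c⌋ - ⌊F n - c⌋ : ℤ) : ℝ) - 1 + 2 * Int.fract (F (n+1) - c)) / 2
            / (F (n+1) - F n)
          ≤ ((⌊F (n+1) - c⌋ : ℤ) : ℝ) - ((⌊F n - c⌋ : ℤ) : ℝ) := by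
      intro n _
      have hd : 0 < F (n+1) - F n := sub_pos.mpr (hm n)
      have huv : F n - c < F (n+1) - c := by linarith [hm n]
      have h2 := (Eterm_bounds _ _ huv).2
      rw [div_le_iff₀ hd]
      calc _ ≤ ((⌊F (n+1) - c⌋ - ⌊F n - c⌋ : ℤ) : ℝ) * ((F (n+1) - c) - (F n - c)) := h2
        _ = (((⌊F (n+1) - c⌋ : ℤ) : ℝ) - ((⌊F n - c⌋ : ℤ) : ℝ)) * (F (n+1) - F n) := by
            push_cast; ring
    calc _ ≤ ∑ n ∈ Finset.range X, (((⌊F (n+1) - c⌋ : ℤ) : ℝ) - ((⌊F n - c⌋ : ℤ) : ℝ)) :=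
          Finset.sum_le_sum h1
      _ = ((⌊F X - c⌋ : ℤ) : ℝ) - ((⌊F 0 - c⌋ : ℤ) : ℝ) :=
          Finset.sum_range_sub (fun n => ((⌊F n - c⌋ : ℤ) : ℝ)) X

lemma floor_fract_sub (s c : ℝ) (hs0 : 0 ≤ s) (hs1 : s < 1) (hc0 : 0 ≤ c) (hc1 : c ≤ 1) :
    ⌊s - c⌋ = if c ≤ s then 0 else -1 := by
  split_ifs with h
  · rw [Int.floor_eq_zero_iff]; exact ⟨by linarith, by linarith⟩
  · have : ⌊s - c⌋ = (-1 : ℤ) ↔ ((-1 : ℤ) : ℝ) ≤ s - c ∧ s - c < (-1 : ℤ) + 1 := Int.floor_eq_iff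
    rw [this]
    push_cast
    constructor <;> linarith

lemma indicator_eq (x a b : ℝ) (h0a : 0 ≤ a) (hab : a ≤ b) (hb1 : b ≤ 1) :
    (if Int.fract x ∈ Set.Icc a b then (1:ℝ) else 0)
      = ((⌊x - a⌋ : ℤ) : ℝ) - ((⌊x - b⌋ : ℤ) : ℝ) + (if Int.fract x = b then (1:ℝ) else 0) := by
  have hs0 := Int.fract_nonneg x
  have hs1 := Int.fract_lt_one x
  have hxa : x - a = ((⌊x⌋ : ℤ) : ℝ) + (Int.fract x - a) := by rw [Int.fract]; ring
  have hxb : x - b = ((⌊x⌋ : ℤ) : ℝ) + (Int.fract x - b) := by rw [Int.fract]; ring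
  rw [hxa, hxb, Int.floor_intCast_add, Int.floor_intCast_add,
      floor_fract_sub _ _ hs0 hs1 h0a (hab.trans hb1),
      floor_fract_sub _ _ hs0 hs1 (h0a.trans hab) hb1]
  by_cases h1 : a ≤ Int.fract x <;> by_cases h2 : b ≤ Int.fract x <;>
    by_cases h3 : Int.fract x = b <;>
    (try simp [Set.mem_Icc, h1, h2, h3, hab]) <;>
    first
      | (push_cast; ring1)
      | linarith
      | (exact h2.lt_of_ne (Ne.symm h3))
      | (exact (not_le.mp h2).le)
      | (exact not_le.mp h2)
      | (exfalso; first | linarith | (apply h3; linarith) | (apply h1; linarith))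

lemma count_fract_eq (F : ℕ → ℝ) (hsm : StrictMono F) (b : ℝ) (X : ℕ) :
    (((Finset.range X).filter (fun n => Int.fract (F n) = b)).card : ℝ)
      ≤ F X - F 0 + 1 := by
  have hmono : F 0 ≤ F X := hsm.monotone (Nat.zero_le X)
  have hcard : ((Finset.range X).filter (fun n => Int.fract (F n) = b)).card
      ≤ (Finset.Icc ⌈F 0 - b⌉ ⌊F X - b⌋).card := by
    apply Finset.card_le_card_of_injOn (fun n => ⌊F n⌋)
    · intro n hn
      simp only [Finset.mem_coe, Finset.mem_filter, Finset.mem_range] at hn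
      have hfr : F n - b = ((⌊F n⌋ : ℤ) : ℝ) := by
        have := hn.2
        rw [Int.fract] at this
        linarith
      rw [Finset.mem_coe, Finset.mem_Icc]
      constructor
      · rw [Int.ceil_le, ← hfr]
        have : F 0 ≤ F n := hsm.monotone (Nat.zero_le n)
        linarith
      · rw [Int.le_floor, ← hfr]
        have : F n ≤ F X := hsm.monotone hn.1.le
        linarith
    · intro n hn m hm hnm
      simp only [Finset.coe_filter, Set.mem_setOf_eq, Finset.mem_range] at hn hm
      by_contra hne
      have hne' : F n ≠ F m := fun h => hne (hsm.injective h)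
      have h1 : F n - b = ((⌊F n⌋ : ℤ) : ℝ) := by
        have := hn.2; rw [Int.fract] at this; linarith
      have h2 : F m - b = ((⌊F m⌋ : ℤ) : ℝ) := by
        have := hm.2; rw [Int.fract] at this; linarith
      apply hne'
      have : ((⌊F n⌋ : ℤ) : ℝ) = ((⌊F m⌋ : ℤ) : ℝ) := by
        simp only at hnm
        rw [hnm]
      linarith
  have h2 : ((Finset.Icc ⌈F 0 - b⌉ ⌊F X - b⌋).card : ℝ) ≤ F X - F 0 + 1 := by
    rw [Int.card_Icc]
    have hle : (⌊F X - b⌋ + 1 - ⌈F 0 - b⌉ : ℤ) ≤ ((⌊F X - b⌋ + 1 - ⌈F 0 - b⌉).toNat : ℤ) :=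
      Int.self_le_toNat _
    rcases le_or_gt (⌊F X - b⌋ + 1 - ⌈F 0 - b⌉) 0 with h | h
    · have : (⌊F X - b⌋ + 1 - ⌈F 0 - b⌉).toNat = 0 := Int.toNat_of_nonpos h
      rw [this]; push_cast; linarith
    · have : ((⌊F X - b⌋ + 1 - ⌈F 0 - b⌉).toNat : ℤ) = ⌊F X - b⌋ + 1 - ⌈F 0 - b⌉ :=
        Int.toNat_of_nonneg h.le
      have hfl : ((⌊F X - b⌋ : ℤ) : ℝ) ≤ F X - b := Int.floor_le _
      have hcl : F 0 - b ≤ ((⌈F 0 - b⌉ : ℤ) : ℝ) := Int.le_ceil _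
      have : (((⌊F X - b⌋ + 1 - ⌈F 0 - b⌉).toNat : ℤ) : ℝ) = ((⌊F X - b⌋ : ℤ) : ℝ) + 1 - ((⌈F 0 - b⌉ : ℤ) : ℝ) := by
        rw [this]; push_cast; ring
      push_cast at this ⊢
      rw [this]
      linarith
  calc (((Finset.range X).filter (fun n => Int.fract (F n) = b)).card : ℝ)
      ≤ ((Finset.Icc ⌈F 0 - b⌉ ⌊F X - b⌋).card : ℝ) := by exact_mod_cast hcard
    _ ≤ F X - F 0 + 1 := h2

lemma growth (F : ℕ → ℝ) (hd : ∀ n, F (n+2) - F (n+1) < F (n+1) - F n) (M : ℕ) :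
    ((M:ℝ)+1) * (F (M+2) - F (M+1)) < F (M+1) - F 0 := by
  have hanti : StrictAnti (fun n => F (n+1) - F n) :=
    strictAnti_nat_of_succ_lt (fun n => hd n)
  have h1 : ∀ n ∈ Finset.range (M+1), F (M+2) - F (M+1) < F (n+1) - F n := by
    intro n hn
    simp only [Finset.mem_range] at hn
    exact hanti (by omega : n < M+1)
  have h2 : ∑ _n ∈ Finset.range (M+1), (F (M+2) - F (M+1)) < ∑ n ∈ Finset.range (M+1), (F (n+1) - F n) :=
    Finset.sum_lt_sum_of_nonempty ⟨0, Finset.mem_range.mpr (by omega)⟩ h1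
  rw [Finset.sum_range_sub, Finset.sum_const, Finset.card_range] at h2
  have : ((M+1 : ℕ) : ℝ) = (M:ℝ)+1 := by push_cast; ring
  calc ((M:ℝ)+1) * (F (M+2) - F (M+1)) = (M+1 : ℕ) • (F (M+2) - F (M+1)) := by
        rw [nsmul_eq_mul]; push_cast; ring
    _ < F (M+1) - F 0 := h2

theorem stmt8
    -- `(f_D)_{D ≥ 1}` is a strictly increasing sequence of positive reals
    (f : ℕ → ℝ)
    (hfpos : ∀ D, 1 ≤ D → 0 < f D)
    (hfmono : ∀ D, 1 ≤ D → f D < f (D + 1))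
    -- whose difference sequence is strictly decreasing (and positive):
    (hfdec : ∀ D, 1 ≤ D → f (D + 2) - f (D + 1) < f (D + 1) - f D)
    (X : ℕ) (hX : 1 ≤ X) (a b : ℝ) (h0a : 0 ≤ a) (hab : a ≤ b) (hb1 : b ≤ 1) :
    |({D : ℕ | 1 ≤ D ∧ D ≤ X ∧ Int.fract (f D) ∈ Set.Icc a b}.ncard : ℝ) - (b - a) * (X : ℝ)|
      < (3 * Real.pi + 1) * (X : ℝ) ^ ((1 : ℝ) / 2) * (f (X + 1)) ^ ((1 : ℝ) / 2)
        + (Real.pi / 2) * (1 / (f (X + 2) - f (X + 1))) := by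
  classical
  set F : ℕ → ℝ := fun n => f (n + 1) with hF
  have hm : ∀ n, F n < F (n+1) := fun n => hfmono (n+1) (by omega)
  have hd : ∀ n, F (n+2) - F (n+1) < F (n+1) - F n := fun n => hfdec (n+1) (by omega)
  have hp0 : 0 < F 0 := hfpos 1 le_rfl
  have hsm : StrictMono F := strictMono_nat_of_lt_succ hm
  -- abbreviations
  obtain ⟨M, rfl⟩ : ∃ M, X = M + 1 := ⟨X - 1, by omega⟩
  set FX : ℝ := F (M+1) with hFX
  have hFXpos : 0 < FX := hp0.trans (hsm (by omega))
  set dlast : ℝ := F (M+1) - F M with hdlast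
  set dd : ℝ := F (M+2) - F (M+1) with hdd
  have hdlastpos : 0 < dlast := sub_pos.mpr (hm M)
  have hddpos : 0 < dd := sub_pos.mpr (hm (M+1))
  have hddlt : dd < dlast := hd M
  -- the count as a sum over range (M+1)
  have hset : {D : ℕ | 1 ≤ D ∧ D ≤ M + 1 ∧ Int.fract (f D) ∈ Set.Icc a b}
      = ↑((Finset.Icc 1 (M+1)).filter (fun D => Int.fract (f D) ∈ Set.Icc a b)) := by
    ext D
    simp [Set.mem_setOf_eq, Finset.mem_filter, Finset.mem_Icc, and_assoc]
  have hNcast : ({D : ℕ | 1 ≤ D ∧ D ≤ M + 1 ∧ Int.fract (f D) ∈ Set.Icc a b}.ncard : ℝ)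
      = ∑ n ∈ Finset.range (M+1), (if Int.fract (F n) ∈ Set.Icc a b then (1:ℝ) else 0) := by
    rw [hset, Set.ncard_coe_finset]
    rw [← Finset.sum_boole]
    have : Finset.Icc 1 (M+1) = Finset.Ico 1 (M+2) := by
      exact (Finset.Ico_add_one_right_eq_Icc 1 (M+1)).symm
    rw [this, Finset.sum_Ico_eq_sum_range]
    apply Finset.sum_congr rfl
    intro n _
    have : 1 + n = n + 1 := by omega
    rw [this]
  set N : ℝ := ({D : ℕ | 1 ≤ D ∧ D ≤ M + 1 ∧ Int.fract (f D) ∈ Set.Icc a b}.ncard : ℝ) with hN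
  -- trivial bounds on N
  have hNnonneg : 0 ≤ N := by positivity
  have hNle : N ≤ (M:ℝ) + 1 := by
    rw [hN, hset, Set.ncard_coe_finset]
    have h1 : ((Finset.Icc 1 (M+1)).filter (fun D => Int.fract (f D) ∈ Set.Icc a b)).card
        ≤ (Finset.Icc 1 (M+1)).card := Finset.card_filter_le _ _
    have h2 : (Finset.Icc 1 (M+1)).card = M + 1 := by rw [Nat.card_Icc]; omega
    rw [h2] at h1
    exact_mod_cast h1
  -- epsilon sum
  set Eps : ℝ := ∑ n ∈ Finset.range (M+1), (if Int.fract (F n) = b then (1:ℝ) else 0) with hEps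
  have hEpsNonneg : 0 ≤ Eps := Finset.sum_nonneg (fun n _ => by positivity)
  have hEpsLe : Eps ≤ F (M+1) - F 0 + 1 := by
    rw [hEps, Finset.sum_boole]
    exact count_fract_eq F hsm b (M+1)
  -- the main identity
  set Sa : ℝ := ∑ n ∈ Finset.range (M+1), (sawPhi (F (n+1) - a) - sawPhi (F n - a)) / (F (n+1) - F n) with hSa
  set Sb : ℝ := ∑ n ∈ Finset.range (M+1), (sawPhi (F (n+1) - b) - sawPhi (F n - b)) / (F (n+1) - F n) with hSb
  set Ea : ℝ := ∑ n ∈ Finset.range (M+1), ((⌊F (n+1) - a⌋ - ⌊F n - a⌋ : ℤ) : ℝ)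
            * (((⌊F (n+1) - a⌋ - ⌊F n - a⌋ : ℤ) : ℝ) - 1 + 2 * Int.fract (F (n+1) - a)) / 2
            / (F (n+1) - F n) with hEa
  set Eb : ℝ := ∑ n ∈ Finset.range (M+1), ((⌊F (n+1) - b⌋ - ⌊F n - b⌋ : ℤ) : ℝ)
            * (((⌊F (n+1) - b⌋ - ⌊F n - b⌋ : ℤ) : ℝ) - 1 + 2 * Int.fract (F (n+1) - b)) / 2
            / (F (n+1) - F n) with hEb
  have hmain : N = (b - a) * ((M:ℝ)+1) + (Sb - Sa) + (Eb - Ea) + Eps := by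
    rw [hNcast]
    have h1 : ∀ n ∈ Finset.range (M+1), (if Int.fract (F n) ∈ Set.Icc a b then (1:ℝ) else 0)
        = ((b - a) + Int.fract (F n - b) - Int.fract (F n - a))
          + (if Int.fract (F n) = b then (1:ℝ) else 0) := by
      intro n _
      rw [indicator_eq (F n) a b h0a hab hb1]
      have ha' : ((⌊F n - a⌋ : ℤ) : ℝ) = (F n - a) - Int.fract (F n - a) := by
        rw [Int.fract]; ring
      have hb' : ((⌊F n - b⌋ : ℤ) : ℝ) = (F n - b) - Int.fract (F n - b) := by
        rw [Int.fract]; ring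
      rw [ha', hb']
      ring
    rw [Finset.sum_congr rfl h1, Finset.sum_add_distrib]
    have h2 : ∑ n ∈ Finset.range (M+1), ((b - a) + Int.fract (F n - b) - Int.fract (F n - a))
        = (b - a) * ((M:ℝ)+1)
          + (∑ n ∈ Finset.range (M+1), Int.fract (F n - b))
          - (∑ n ∈ Finset.range (M+1), Int.fract (F n - a)) := by
      rw [Finset.sum_sub_distrib, Finset.sum_add_distrib, Finset.sum_const, Finset.card_range,
        nsmul_eq_mul]
      push_cast
      ring
    rw [h2, sum_fract_eq F hm a (M+1), sum_fract_eq F hm b (M+1)]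
    rw [← hSa, ← hSb, ← hEa, ← hEb, ← hEps]
    push_cast
    ring
  -- bounds on the pieces
  have hSbound : ∀ c : ℝ, |∑ n ∈ Finset.range (M+1),
      (sawPhi (F (n+1) - c) - sawPhi (F n - c)) / (F (n+1) - F n)| ≤ 1/(4*dlast) := by
    intro c
    have h1 := abel_bound F hm hd c M
    have h2 : |sawPhi (F (M+1) - c) / (F (M+1) - F M)| ≤ 1/(8*dlast) := by
      rw [abs_div, abs_of_pos hdlastpos]
      have : |sawPhi (F (M+1) - c)| ≤ 1/8 := by
        rw [abs_le]; constructor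
        · linarith [sawPhi_ge (F (M+1) - c)]
        · linarith [sawPhi_nonpos (F (M+1) - c)]
      calc |sawPhi (F (M+1) - c)| / dlast ≤ (1/8) / dlast := by gcongr
        _ = 1/(8*dlast) := div_div 1 8 _
    have htri : |∑ n ∈ Finset.range (M+1), (sawPhi (F (n+1) - c) - sawPhi (F n - c)) / (F (n+1) - F n)|
        ≤ |∑ n ∈ Finset.range (M+1), (sawPhi (F (n+1) - c) - sawPhi (F n - c)) / (F (n+1) - F n)
            - sawPhi (F (M+1) - c) / (F (M+1) - F M)|
          + |sawPhi (F (M+1) - c) / (F (M+1) - F M)| := by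
      have h := abs_add_le (∑ n ∈ Finset.range (M+1),
          (sawPhi (F (n+1) - c) - sawPhi (F n - c)) / (F (n+1) - F n)
          - sawPhi (F (M+1) - c) / (F (M+1) - F M)) (sawPhi (F (M+1) - c) / (F (M+1) - F M))
      rw [sub_add_cancel] at h
      exact h
    calc |∑ n ∈ Finset.range (M+1), (sawPhi (F (n+1) - c) - sawPhi (F n - c)) / (F (n+1) - F n)|
        ≤ _ := htri
      _ ≤ 1/(8*dlast) + 1/(8*dlast) := add_le_add h1 h2
      _ = 1/(4*dlast) := by field_simp; ring
  have hSa' : |Sa| ≤ 1/(4*dlast) := hSbound a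
  have hSb' : |Sb| ≤ 1/(4*dlast) := hSbound b
  have hK : ∀ c : ℝ, ((⌊F (M+1) - c⌋ : ℤ) : ℝ) - ((⌊F 0 - c⌋ : ℤ) : ℝ) ≤ F (M+1) - F 0 + 1 := by
    intro c
    have h1 : ((⌊F (M+1) - c⌋ : ℤ) : ℝ) ≤ F (M+1) - c := Int.floor_le _
    have h2 : F 0 - c - 1 < ((⌊F 0 - c⌋ : ℤ) : ℝ) := by
      linarith [Int.lt_floor_add_one (F 0 - c)]
    linarith
  have hEa' : 0 ≤ Ea ∧ Ea ≤ F (M+1) - F 0 + 1 :=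
    ⟨(Esum_bounds F hm a (M+1)).1, (Esum_bounds F hm a (M+1)).2.trans (hK a)⟩
  have hEb' : 0 ≤ Eb ∧ Eb ≤ F (M+1) - F 0 + 1 :=
    ⟨(Esum_bounds F hm b (M+1)).1, (Esum_bounds F hm b (M+1)).2.trans (hK b)⟩
  -- two bounds on the error
  set err : ℝ := N - (b - a) * ((M:ℝ)+1) with herr
  have herr_eq : err = (Sb - Sa) + (Eb - Ea) + Eps := by rw [herr, hmain]; ring
  have hB1 : |err| ≤ (M:ℝ)+1 := by
    rw [abs_le]
    have hba0 : 0 ≤ (b-a) := by linarith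
    have hba1 : b - a ≤ 1 := by linarith
    have hM0 : (0:ℝ) ≤ (M:ℝ)+1 := by positivity
    constructor
    · rw [herr]; linarith [hNnonneg, mul_le_mul_of_nonneg_right hba1 hM0]
    · rw [herr]; linarith [hNle, mul_nonneg hba0 hM0]
  have hB2 : |err| ≤ 1/(2*dlast) + 2*(F (M+1) - F 0 + 1) := by
    rw [herr_eq, abs_le]
    rw [abs_le] at hSa' hSb'
    have hKnn : (0:ℝ) ≤ F (M+1) - F 0 + 1 := by
      have := hsm (show 0 < M+1 by omega)
      linarith
    constructor
    · have : -(1/(2*dlast)) ≤ Sb - Sa := by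
        have h4 : 1/(4*dlast) + 1/(4*dlast) = 1/(2*dlast) := by field_simp; ring
        linarith [hSa'.2, hSb'.1]
      linarith [hEa'.2, hEb'.1, hEpsNonneg, hKnn, this]
    · have : Sb - Sa ≤ 1/(2*dlast) := by
        have h4 : 1/(4*dlast) + 1/(4*dlast) = 1/(2*dlast) := by field_simp; ring
        linarith [hSa'.1, hSb'.2]
      linarith [hEa'.1, hEb'.2, hEpsLe, hKnn, this]
  -- growth
  have hgrow : ((M:ℝ)+1) * dd < FX := by
    have := growth F hd M
    rw [← hFX, ← hdd] at this
    linarith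
  have hfX1 : f (M+1+1) = FX := rfl
  have hfX2 : f (M+1+2) - f (M+1+1) = dd := rfl
  have hB2' : |err| ≤ 1/(2*dlast) + 2*(FX + 1) := by
    refine hB2.trans ?_
    have h5 : F (M+1) - F 0 + 1 ≤ FX + 1 := by rw [hFX]; linarith
    linarith
  have hge : N - (b - a) * ((M+1 : ℕ):ℝ) = err := by rw [herr]; push_cast; ring
  clear_value N Sa Sb Ea Eb Eps err FX dlast dd
  clear hmain hNcast hset hN hSa hSb hEa hEb hEps herr herr_eq hB2 hSa' hSb' hEa' hEb'
    hEpsNonneg hEpsLe hNnonneg hNle hsm hp0 hm hd hK hSbound hFX hdlast hdd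
  clear * - hB1 hB2' hgrow hFXpos hdlastpos hddpos hddlt hfX1 hfX2 hge
  have hXc : ((M+1 : ℕ) : ℝ) = (M:ℝ)+1 := by push_cast; ring
  have hnn1 : (0:ℝ) ≤ (M:ℝ)+1 := by positivity
  have hrw : (3 * Real.pi + 1) * ((M+1 : ℕ) : ℝ) ^ ((1 : ℝ) / 2) * (f (M+1+1)) ^ ((1 : ℝ) / 2)
      = (3 * Real.pi + 1) * Real.sqrt (((M:ℝ)+1) * FX) := by
    rw [← Real.sqrt_eq_rpow, ← Real.sqrt_eq_rpow, hXc, hfX1, Real.sqrt_mul hnn1, mul_assoc]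
  have hgoal : |err| < (3 * Real.pi + 1) * Real.sqrt (((M:ℝ)+1) * FX) + (Real.pi / 2) * (1 / dd) := by
    set s : ℝ := Real.sqrt (((M:ℝ)+1) * FX) with hs
    set Xr : ℝ := (M:ℝ)+1 with hXr
    have hgrow2 : Xr * dd < FX := hgrow
    have hBB0 : |err| ≤ 1/(2*dlast) + 2*(FX + 1) := hB2' 
    have hs0 : 0 ≤ s := Real.sqrt_nonneg _
    have hs2 : s^2 = Xr * FX := Real.sq_sqrt (by positivity)
    have hpi : 3.141592 < Real.pi := Real.pi_gt_d6
    have hpi2 : Real.pi < 3.15 := Real.pi_lt_d2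
    have hXr1 : 1 ≤ Xr := by rw [hXr]; have : (0:ℝ) ≤ (M:ℝ) := Nat.cast_nonneg M; linarith
    have hu0 : 0 < 1/dd := by positivity
    clear_value s Xr
    clear hs hXr hrw hfX1 hfX2
    clear hB2' hgrow
    by_cases hcase : Xr ≤ 108 * FX
    · have hXrpos : (0:ℝ) < Xr := by linarith
      have h5 : (108.5:ℝ) ≤ (3*Real.pi+1)^2 := by
        nlinarith [hpi, mul_self_nonneg (Real.pi - 3.141592)]
      have h1 : Xr < (3*Real.pi+1)*s := by
        by_contra hcon
        push_neg at hcon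
        have hcnn : (0:ℝ) ≤ (3*Real.pi+1)*s := mul_nonneg (by linarith) hs0
        have h2 : ((3*Real.pi+1)*s)^2 ≤ Xr^2 := pow_le_pow_left₀ hcnn hcon 2
        rw [mul_pow, hs2] at h2
        have h4 : Xr * Xr ≤ Xr * (108 * FX) := mul_le_mul_of_nonneg_left hcase hXrpos.le
        have h6 : 108.5 * (Xr*FX) ≤ (3*Real.pi+1)^2 * (Xr*FX) :=
          mul_le_mul_of_nonneg_right h5 (by positivity)
        have h7 : 0 < Xr*FX := mul_pos hXrpos hFXpos
        have h8 : Xr^2 = Xr*Xr := by ring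
        linarith
      have h2 : 0 < (Real.pi/2) * (1/dd) := mul_pos (by linarith) hu0
      calc |err| ≤ Xr := hB1
        _ < _ := by linarith
    · push_neg at hcase
      have hXrpos : (0:ℝ) < Xr := by linarith
      have hu : Xr/FX < 1/dd := by
        rw [div_lt_div_iff₀ hFXpos hddpos]
        linarith [hgrow2]
      have hdinv : 1/(2*dlast) ≤ 1/(2*dd) := by gcongr
      have hBB : |err| ≤ 2*FX + 2 + 1/(2*dd) := by
        calc |err| ≤ 1/(2*dlast) + 2*(FX + 1) := hBB0
          _ ≤ 1/(2*dd) + 2*(FX+1) := by linarith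
          _ = 2*FX + 2 + 1/(2*dd) := by ring
      have hhalf : 1/(2*dd) = (1/2) * (1/dd) := by
        field_simp
      have hs2' : s*s = Xr*FX := by rw [← hs2]; ring
      by_cases hsc : 1/25 ≤ Xr * FX
      · have hs15 : 1/5 ≤ s := by
          by_contra hcon
          push_neg at hcon
          have h9 : s*s < (1/5)*(1/5) := mul_lt_mul'' hcon hcon hs0 hs0
          linarith
        have h2f : 2*FX ≤ (1/5)*s := by
          by_contra hcon
          push_neg at hcon
          have hA : (1/5*s)*(1/5*s) < (2*FX)*(2*FX) :=
            mul_lt_mul'' hcon hcon (by linarith) (by linarith)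
          have hB : FX * (108*FX) < FX * Xr := mul_lt_mul_of_pos_left hcase hFXpos
          have hC : 0 < Xr*FX := mul_pos hXrpos hFXpos
          nlinarith [hA, hB, hC, hs2']
        have hπu : 0 ≤ ((Real.pi-1)/2) * (1/dd) := mul_nonneg (by linarith) hu0.le
        have hkey : (3*Real.pi + 4/5) * (1/5) ≤ (3*Real.pi + 4/5) * s :=
          mul_le_mul_of_nonneg_left hs15 (by linarith)
        calc |err| ≤ 2*FX + 2 + 1/(2*dd) := hBB
          _ < (3*Real.pi+1)*s + (Real.pi/2) * (1/dd) := by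
              rw [hhalf]
              nlinarith [hkey, h2f, hπu, hpi]
      · push_neg at hsc
        have hFX1 : (1:ℝ)*FX ≤ Xr*FX := mul_le_mul_of_nonneg_right hXr1 hFXpos.le
        have hFXsmall : FX < 1/25 := by linarith
        have h25 : 25 < 1/dd := by
          have ha : (1:ℝ)/FX ≤ Xr/FX := by gcongr
          have hb : (25:ℝ) < 1/FX := by
            rw [lt_div_iff₀ hFXpos]
            linarith
          linarith
        have hc : ((Real.pi-1)/2) * 25 < ((Real.pi-1)/2) * (1/dd) :=
          mul_lt_mul_of_pos_left h25 (by linarith)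
        have hsnn : 0 ≤ (3*Real.pi+1)*s := mul_nonneg (by linarith) hs0
        calc |err| ≤ 2*FX + 2 + 1/(2*dd) := hBB
          _ < (3*Real.pi+1)*s + (Real.pi/2) * (1/dd) := by
              rw [hhalf]
              nlinarith [hc, hsnn, hFXsmall, hpi]
  -- finish
  rw [hrw, hge]
  exact hgoal
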